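/- Per-layer factorization of the stiffness integral in bracket ('B-free') form. Let Ω̄ = [0,1]² ⊂ ℝ² and h = [t₀, t₁] ⊂ ℝ with t₀ < t₁. Let Sᵢ, Sⱼ : Ω̄ → ℝ be continuously differentiable, Tᵢ, Tⱼ : ℝ → ℝ continuously differentiable, J : Ω̄ → ℝ continuous, and let C̃ : Ω̄ → ((Fin 3)⁴ → ℝ) be a continuous fourth-order-tensor field. Define the parametric gradients Gᵢ(ξ̄, t) = (∂₁Sᵢ(ξ̄)Tᵢ(t), ∂₂Sᵢ(ξ̄)Tᵢ(t), Sᵢ(ξ̄)Tᵢ′(t)) ∈ ℝ³ and Gⱼ analogously, and for α, β ∈ Fin 3 write C̃_{αβ}(ξ̄) := C̃(ξ̄){e_α, e_β} ∈ ℝ^{3×3}. Then ∫_{Ω̄×h} C̃(ξ̄){Gᵢ(ξ̄,t), Gⱼ(ξ̄,t)} J(ξ̄) d(ξ̄,t) = P₁₁ Q₁₁ + P₁₂ Q₁₂ + P₂₁ Q₂₁ + P₂₂ Q₂₂, where Q₁₁ = ∫_h TᵢTⱼ, Q₁₂ = ∫_h TᵢTⱼ′, Q₂₁ = ∫_h Tᵢ′Tⱼ,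 Q₂₂ = ∫_h Tᵢ′Tⱼ′, and P₁₁ = ∫_{Ω̄} [C̃₁₁ ∂₁Sᵢ∂₁Sⱼ + C̃₁₂ ∂₁Sᵢ∂₂Sⱼ + C̃₂₁ ∂₂Sᵢ∂₁Sⱼ + C̃₂₂ ∂₂Sᵢ∂₂Sⱼ] J dξ̄, P₁₂ = ∫_{Ω̄} [C̃₁₃ ∂₁Sᵢ + C̃₂₃ ∂₂Sᵢ] Sⱼ J dξ̄, P₂₁ = ∫_{Ω̄} [C̃₃₁ ∂₁Sⱼ + C̃₃₂ ∂₂Sⱼ] Sᵢ J dξ̄, P₂₂ = ∫_{Ω̄} C̃₃₃ Sᵢ Sⱼ J dξ̄. -/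

import Mathlib

open MeasureTheory Matrix

/-- The bracket contraction `C{b,d}` of a fourth-order tensor with two vectors:
`(C{b,d})_{ik} = Σ_{j,l} C_{ijkl} b_j d_l`. -/
def bracket (C : Fin 3 → Fin 3 → Fin 3 → Fin 3 → ℝ) (b d : Fin 3 → ℝ) :
    Matrix (Fin 3) (Fin 3) ℝ :=
  Matrix.of fun i k => ∑ j, ∑ l, C i j k l * b j * d l

/-- Entrywise (Bochner) integral of a matrix-valued function. -/
noncomputable def matInt {α : Type*} [MeasurableSpace α] (μ : Measure α)
    {n m : Type*} (f : α → Matrix n m ℝ) : Matrix n m ℝ :=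
  Matrix.of fun i j => ∫ x, f x i j ∂μ

/-- The in-plane parametric domain `Ω̄ = [0,1]²`. -/
def inPlaneSq : Set (ℝ × ℝ) := Set.Icc (0:ℝ) 1 ×ˢ Set.Icc (0:ℝ) 1

private lemma split4 {F1 F2 F3 F4 : ℝ × ℝ → ℝ} {G1 G2 G3 G4 : ℝ → ℝ} {S : Set (ℝ × ℝ)}
    {I : Set ℝ}
    (hF1 : IntegrableOn F1 S) (hF2 : IntegrableOn F2 S) (hF3 : IntegrableOn F3 S)
    (hF4 : IntegrableOn F4 S)
    (hG1 : IntegrableOn G1 I) (hG2 : IntegrableOn G2 I) (hG3 : IntegrableOn G3 I)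
    (hG4 : IntegrableOn G4 I) :
    ∫ p in S ×ˢ I, (F1 p.1 * G1 p.2 + F2 p.1 * G2 p.2 + F3 p.1 * G3 p.2 + F4 p.1 * G4 p.2)
      = (∫ t in I, G1 t) * (∫ x in S, F1 x) + (∫ t in I, G2 t) * (∫ x in S, F2 x)
        + (∫ t in I, G3 t) * (∫ x in S, F3 x) + (∫ t in I, G4 t) * (∫ x in S, F4 x) := by
  have hrw : (volume : Measure ((ℝ × ℝ) × ℝ)).restrict (S ×ˢ I)
      = (volume.restrict S).prod (volume.restrict I) := by
    rw [Measure.prod_restrict, ← Measure.volume_eq_prod]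
  have i1 := hF1.mul_prod hG1
  have i2 := hF2.mul_prod hG2
  have i3 := hF3.mul_prod hG3
  have i4 := hF4.mul_prod hG4
  have i12 : Integrable (fun z : (ℝ × ℝ) × ℝ => F1 z.1 * G1 z.2 + F2 z.1 * G2 z.2)
      ((volume.restrict S).prod (volume.restrict I)) := i1.add i2
  have i123 : Integrable
      (fun z : (ℝ × ℝ) × ℝ => F1 z.1 * G1 z.2 + F2 z.1 * G2 z.2 + F3 z.1 * G3 z.2)
      ((volume.restrict S).prod (volume.restrict I)) := i12.add i3
  rw [hrw, integral_add i123 i4, integral_add i12 i3,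
    integral_add i1 i2, integral_prod_mul, integral_prod_mul, integral_prod_mul,
    integral_prod_mul]
  ring

/-- Per-layer factorization of the stiffness integral in bracket ('B-free') form:
with parametric gradients `Gᵢ(ξ̄,t) = (∂₁Sᵢ Tᵢ, ∂₂Sᵢ Tᵢ, Sᵢ Tᵢ′)` and the 3×3 matrices
`C̃_{αβ} = C̃{e_α, e_β}`, the 3D integral `∫ C̃{Gᵢ, Gⱼ} J` over `Ω̄ × [t₀,t₁]` equals
`P₁₁Q₁₁ + P₁₂Q₁₂ + P₂₁Q₂₁ + P₂₂Q₂₂` with the stated 2D matrices `P` and 1D scalars `Q`. -/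
theorem bracket_stiffness_factorization_one_layer
    (t₀ t₁ : ℝ) (ht : t₀ < t₁)
    (Si Sj : ℝ × ℝ → ℝ) (hSi : ContDiff ℝ 1 Si) (hSj : ContDiff ℝ 1 Sj)
    (Ti Tj : ℝ → ℝ) (hTi : ContDiff ℝ 1 Ti) (hTj : ContDiff ℝ 1 Tj)
    (J : ℝ × ℝ → ℝ) (hJ : ContinuousOn J inPlaneSq)
    (Ct : ℝ × ℝ → Fin 3 → Fin 3 → Fin 3 → Fin 3 → ℝ) (hCt : ContinuousOn Ct inPlaneSq) :
    matInt (volume.restrict (inPlaneSq ×ˢ Set.Icc t₀ t₁))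
        (fun p => J p.1 • bracket (Ct p.1)
          ![fderiv ℝ Si p.1 (1, 0) * Ti p.2, fderiv ℝ Si p.1 (0, 1) * Ti p.2,
            Si p.1 * deriv Ti p.2]
          ![fderiv ℝ Sj p.1 (1, 0) * Tj p.2, fderiv ℝ Sj p.1 (0, 1) * Tj p.2,
            Sj p.1 * deriv Tj p.2])
      = (∫ t in Set.Icc t₀ t₁, Ti t * Tj t) •
          matInt (volume.restrict inPlaneSq) (fun ξ => J ξ •
            ((fderiv ℝ Si ξ (1, 0) * fderiv ℝ Sj ξ (1, 0)) •
                bracket (Ct ξ) (Pi.single 0 1) (Pi.single 0 1)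
              + (fderiv ℝ Si ξ (1, 0) * fderiv ℝ Sj ξ (0, 1)) •
                bracket (Ct ξ) (Pi.single 0 1) (Pi.single 1 1)
              + (fderiv ℝ Si ξ (0, 1) * fderiv ℝ Sj ξ (1, 0)) •
                bracket (Ct ξ) (Pi.single 1 1) (Pi.single 0 1)
              + (fderiv ℝ Si ξ (0, 1) * fderiv ℝ Sj ξ (0, 1)) •
                bracket (Ct ξ) (Pi.single 1 1) (Pi.single 1 1)))
        + (∫ t in Set.Icc t₀ t₁, Ti t * deriv Tj t) •
          matInt (volume.restrict inPlaneSq) (fun ξ => J ξ •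
            ((fderiv ℝ Si ξ (1, 0) * Sj ξ) • bracket (Ct ξ) (Pi.single 0 1) (Pi.single 2 1)
              + (fderiv ℝ Si ξ (0, 1) * Sj ξ) • bracket (Ct ξ) (Pi.single 1 1) (Pi.single 2 1)))
        + (∫ t in Set.Icc t₀ t₁, deriv Ti t * Tj t) •
          matInt (volume.restrict inPlaneSq) (fun ξ => J ξ •
            ((fderiv ℝ Sj ξ (1, 0) * Si ξ) • bracket (Ct ξ) (Pi.single 2 1) (Pi.single 0 1)
              + (fderiv ℝ Sj ξ (0, 1) * Si ξ) • bracket (Ct ξ) (Pi.single 2 1) (Pi.single 1 1)))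
        + (∫ t in Set.Icc t₀ t₁, deriv Ti t * deriv Tj t) •
          matInt (volume.restrict inPlaneSq) (fun ξ => J ξ •
            ((Si ξ * Sj ξ) • bracket (Ct ξ) (Pi.single 2 1) (Pi.single 2 1))) := by
  have hIc : IsCompact inPlaneSq := by
    unfold inPlaneSq; exact isCompact_Icc.prod isCompact_Icc
  have hCte : ∀ a b c d : Fin 3, ContinuousOn (fun ξ => Ct ξ a b c d) inPlaneSq := by
    intro a b c d
    have hc : Continuous fun f : Fin 3 → Fin 3 → Fin 3 → Fin 3 → ℝ => f a b c d := by fun_prop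
    exact hc.comp_continuousOn hCt
  have hSi1 : Continuous fun ξ : ℝ × ℝ => fderiv ℝ Si ξ ((1 : ℝ), (0 : ℝ)) :=
    (hSi.continuous_fderiv one_ne_zero).clm_apply continuous_const
  have hSi2 : Continuous fun ξ : ℝ × ℝ => fderiv ℝ Si ξ ((0 : ℝ), (1 : ℝ)) :=
    (hSi.continuous_fderiv one_ne_zero).clm_apply continuous_const
  have hSj1 : Continuous fun ξ : ℝ × ℝ => fderiv ℝ Sj ξ ((1 : ℝ), (0 : ℝ)) :=
    (hSj.continuous_fderiv one_ne_zero).clm_apply continuous_const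
  have hSj2 : Continuous fun ξ : ℝ × ℝ => fderiv ℝ Sj ξ ((0 : ℝ), (1 : ℝ)) :=
    (hSj.continuous_fderiv one_ne_zero).clm_apply continuous_const
  have hG1 : IntegrableOn (fun t => Ti t * Tj t) (Set.Icc t₀ t₁) :=
    (hTi.continuous.mul hTj.continuous).integrableOn_Icc
  have hG2 : IntegrableOn (fun t => Ti t * deriv Tj t) (Set.Icc t₀ t₁) :=
    (hTi.continuous.mul (hTj.continuous_deriv le_rfl)).integrableOn_Icc
  have hG3 : IntegrableOn (fun t => deriv Ti t * Tj t) (Set.Icc t₀ t₁) :=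
    ((hTi.continuous_deriv le_rfl).mul hTj.continuous).integrableOn_Icc
  have hG4 : IntegrableOn (fun t => deriv Ti t * deriv Tj t) (Set.Icc t₀ t₁) :=
    ((hTi.continuous_deriv le_rfl).mul (hTj.continuous_deriv le_rfl)).integrableOn_Icc
  ext i k
  simp only [matInt, Matrix.of_apply, Matrix.add_apply, Matrix.smul_apply, smul_eq_mul]
  set F1 : ℝ × ℝ → ℝ := fun ξ =>
    J ξ * ((fderiv ℝ Si ξ (1, 0) * fderiv ℝ Sj ξ (1, 0)) * Ct ξ i 0 k 0
      + (fderiv ℝ Si ξ (1, 0) * fderiv ℝ Sj ξ (0, 1)) * Ct ξ i 0 k 1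
      + (fderiv ℝ Si ξ (0, 1) * fderiv ℝ Sj ξ (1, 0)) * Ct ξ i 1 k 0
      + (fderiv ℝ Si ξ (0, 1) * fderiv ℝ Sj ξ (0, 1)) * Ct ξ i 1 k 1) with hF1def
  set F2 : ℝ × ℝ → ℝ := fun ξ =>
    J ξ * ((fderiv ℝ Si ξ (1, 0) * Sj ξ) * Ct ξ i 0 k 2
      + (fderiv ℝ Si ξ (0, 1) * Sj ξ) * Ct ξ i 1 k 2) with hF2def
  set F3 : ℝ × ℝ → ℝ := fun ξ =>
    J ξ * ((fderiv ℝ Sj ξ (1, 0) * Si ξ) * Ct ξ i 2 k 0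
      + (fderiv ℝ Sj ξ (0, 1) * Si ξ) * Ct ξ i 2 k 1) with hF3def
  set F4 : ℝ × ℝ → ℝ := fun ξ => J ξ * ((Si ξ * Sj ξ) * Ct ξ i 2 k 2) with hF4def
  have hF1 : IntegrableOn F1 inPlaneSq := by
    refine (hJ.mul ?_).integrableOn_compact hIc
    exact ((((hSi1.mul hSj1).continuousOn.mul (hCte i 0 k 0)).add
      ((hSi1.mul hSj2).continuousOn.mul (hCte i 0 k 1))).add
      ((hSi2.mul hSj1).continuousOn.mul (hCte i 1 k 0))).add
      ((hSi2.mul hSj2).continuousOn.mul (hCte i 1 k 1))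
  have hF2 : IntegrableOn F2 inPlaneSq := by
    refine (hJ.mul ?_).integrableOn_compact hIc
    exact ((hSi1.mul hSj.continuous).continuousOn.mul (hCte i 0 k 2)).add
      ((hSi2.mul hSj.continuous).continuousOn.mul (hCte i 1 k 2))
  have hF3 : IntegrableOn F3 inPlaneSq := by
    refine (hJ.mul ?_).integrableOn_compact hIc
    exact ((hSj1.mul hSi.continuous).continuousOn.mul (hCte i 2 k 0)).add
      ((hSj2.mul hSi.continuous).continuousOn.mul (hCte i 2 k 1))
  have hF4 : IntegrableOn F4 inPlaneSq := by
    refine (hJ.mul ?_).integrableOn_compact hIc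
    exact (hSi.continuous.mul hSj.continuous).continuousOn.mul (hCte i 2 k 2)
  trans ((∫ t in Set.Icc t₀ t₁, Ti t * Tj t) * (∫ x in inPlaneSq, F1 x)
    + (∫ t in Set.Icc t₀ t₁, Ti t * deriv Tj t) * (∫ x in inPlaneSq, F2 x)
    + (∫ t in Set.Icc t₀ t₁, deriv Ti t * Tj t) * (∫ x in inPlaneSq, F3 x)
    + (∫ t in Set.Icc t₀ t₁, deriv Ti t * deriv Tj t) * (∫ x in inPlaneSq, F4 x))
  · rw [← split4 hF1 hF2 hF3 hF4 hG1 hG2 hG3 hG4]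
    refine integral_congr_ae (Filter.Eventually.of_forall fun p => ?_)
    simp only [hF1def, hF2def, hF3def, hF4def, bracket, Matrix.of_apply, Fin.sum_univ_three,
      Matrix.cons_val_zero, Matrix.cons_val_one, Matrix.head_cons, Matrix.cons_val_two,
      Matrix.tail_cons]
    ring
  · have hbs : ∀ (C : Fin 3 → Fin 3 → Fin 3 → Fin 3 → ℝ) (a b i' k' : Fin 3),
        bracket C (Pi.single a 1) (Pi.single b 1) i' k' = C i' a k' b := by
      intro C a b i' k'
      fin_cases a <;> fin_cases b <;>
        simp [bracket, Fin.sum_univ_three, Pi.single_apply]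
    simp only [hbs]
    rfl
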